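/- For every integer p ≥ 1, the Bernoulli number B_{2p} satisfies B_{2p} = (-1)^{p+1} (2p)! · D_p / (2 · (2^{2p-1} − 1)). -/

import Mathlib

open Finset PowerSeries

def D : ℕ → ℚ
  | 0 => 1
  | k + 1 =>
    Matrix.det (fun i j : Fin (k + 1) =>
      if (i : ℕ) ≤ (j : ℕ) then 1 / ((2 * ((j : ℕ) - (i : ℕ)) + 3).factorial : ℚ)
      else if (j : ℕ) + 1 = (i : ℕ) then 1 else 0)

def ent (i j : ℕ) : ℚ :=
  if i ≤ j then 1 / ((2 * (j - i) + 3).factorial : ℚ)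
  else if j + 1 = i then 1 else 0

lemma D_succ (k : ℕ) :
    D (k + 1) = Matrix.det (Matrix.of fun i j : Fin (k + 1) => ent i j) := rfl

lemma coe_succAbove' {n : ℕ} (i : Fin (n + 1)) (j : Fin n) :
    ((i.succAbove j : Fin (n + 1)) : ℕ) = if (j : ℕ) < (i : ℕ) then (j : ℕ) else (j : ℕ) + 1 := by
  rcases lt_or_ge (Fin.castSucc j) i with h | h
  · rw [Fin.succAbove_of_castSucc_lt _ _ h]
    have : (j : ℕ) < (i : ℕ) := h
    simp [this]
  · rw [Fin.succAbove_of_le_castSucc _ _ h]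
    have : ¬ ((j : ℕ) < (i : ℕ)) := by
      have : (i : ℕ) ≤ (j : ℕ) := h
      omega
    simp [this]

lemma det_sub (k : ℕ) (i : Fin (k + 1)) :
    Matrix.det ((Matrix.of fun a b : Fin (k + 1) => ent a b).submatrix i.succAbove Fin.castSucc)
      = D i := by
  induction k with
  | zero =>
      have : (i : ℕ) = 0 := by omega
      rw [this]
      exact Matrix.det_fin_zero
  | succ k ih =>
      by_cases hl : i = Fin.last (k + 1)
      · subst hl
        have hm : ((Matrix.of fun a b : Fin (k + 2) => ent a b).submatrix
            (Fin.last (k + 1)).succAbove Fin.castSucc)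
            = (Matrix.of fun a b : Fin (k + 1) => ent a b) := by
          ext a b
          simp [Fin.succAbove_last]
        rw [hm, ← D_succ]
        simp
      · have hik : (i : ℕ) < k + 1 := by
          have := Fin.val_lt_last hl
          omega
        set N := ((Matrix.of fun a b : Fin (k + 2) => ent a b).submatrix i.succAbove Fin.castSucc)
          with hN
        rw [Matrix.det_succ_row N (Fin.last k)]
        have hrow : ∀ j : Fin (k + 1), N (Fin.last k) j = if j = Fin.last k then 1 else 0 := by
          intro j
          have h1 : ((i.succAbove (Fin.last k) : Fin (k + 2)) : ℕ) = k + 1 := by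
            rw [coe_succAbove']
            simp [hik]
            omega
          simp only [hN, Matrix.submatrix_apply, Matrix.of_apply]
          rw [show (ent ↑(i.succAbove (Fin.last k)) ↑(Fin.castSucc j)) = ent (k+1) (j:ℕ) by
            rw [h1]; simp]
          unfold ent
          have hj : (j : ℕ) < k + 1 := j.isLt
          by_cases hje : j = Fin.last k
          · subst hje; simp
          · have : (j : ℕ) < k := by
              have := Fin.val_lt_last hje
              omega
            rw [if_neg (by omega), if_neg (by omega), if_neg (by simp [Fin.ext_iff]; omega)]
        rw [Finset.sum_eq_single (Fin.last k)]
        · rw [hrow]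
          simp only [if_pos rfl, mul_one]
          have hsub : (N.submatrix (Fin.last k).succAbove (Fin.last k).succAbove)
              = ((Matrix.of fun a b : Fin (k + 1) => ent a b).submatrix
                  (⟨(i : ℕ), hik⟩ : Fin (k + 1)).succAbove Fin.castSucc) := by
            ext a b
            simp only [hN, Matrix.submatrix_apply, Matrix.of_apply, Fin.succAbove_last]
            rw [coe_succAbove', coe_succAbove']
            simp
          rw [hsub, ih]
          simp
        · intro j _ hj
          rw [hrow, if_neg hj]
          ring
        · intro h
          exact absurd (Finset.mem_univ _) h

lemma neg_one_pow_sub {k i : ℕ} (h : i ≤ k) : ((-1 : ℚ)) ^ (k - i) = (-1) ^ (k + i) := by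
  conv_rhs => rw [show k + i = (k - i) + 2 * i by omega]
  rw [pow_add, pow_mul]
  simp

lemma D_rec (k : ℕ) :
    D (k + 1) = ∑ i ∈ range (k + 1),
      (-1) ^ (k - i) * D i / ((2 * (k - i) + 3).factorial : ℚ) := by
  rw [D_succ, Matrix.det_succ_column _ (Fin.last k)]
  rw [← Fin.sum_univ_eq_sum_range
    (fun i => (-1 : ℚ) ^ (k - i) * D i / ((2 * (k - i) + 3).factorial : ℚ)) (k + 1)]
  apply Finset.sum_congr rfl
  intro i _
  rw [Fin.succAbove_last, det_sub]
  have hi : (i : ℕ) ≤ k := by omega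
  have h1 : (Matrix.of fun a b : Fin (k + 1) => ent ↑a ↑b) i (Fin.last k)
      = 1 / ((2 * (k - (i : ℕ)) + 3).factorial : ℚ) := by
    simp only [Matrix.of_apply, ent, Fin.val_last]
    rw [if_pos hi]
  have hs : ((-1 : ℚ)) ^ ((i : ℕ) + ((Fin.last k : Fin (k + 1)) : ℕ)) = (-1) ^ (k - (i : ℕ)) := by
    simp only [Fin.val_last]
    rw [neg_one_pow_sub hi, add_comm]
  rw [h1, hs]
  ring


noncomputable def Bps : PowerSeries ℚ := bernoulliPowerSeries ℚ
noncomputable def e : PowerSeries ℚ := PowerSeries.exp ℚ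

lemma exp_sub_one_ne : e - 1 ≠ 0 := by
  intro h
  have := congrArg (PowerSeries.coeff 1) h
  simp [e, PowerSeries.coeff_exp] at this

lemma rescale_two_X : PowerSeries.rescale (2 : ℚ) PowerSeries.X = 2 * PowerSeries.X := by
  rw [PowerSeries.rescale_X]
  rw [show ((2:ℚ⟦X⟧)) = PowerSeries.C (2:ℚ) from (map_ofNat (PowerSeries.C (R := ℚ)) 2).symm]

lemma rescale_two_exp : PowerSeries.rescale (2 : ℚ) e = e * e := by
  have := PowerSeries.exp_mul_exp_eq_exp_add (1 : ℚ) 1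
  rw [show ((1:ℚ) + 1) = 2 by norm_num] at this
  simpa [e] using this.symm

lemma hGA : (e + 1) * PowerSeries.rescale (2 : ℚ) Bps = 2 * Bps := by
  apply mul_right_cancel₀ exp_sub_one_ne
  have h1 : Bps * (e - 1) = PowerSeries.X := bernoulliPowerSeries_mul_exp_sub_one ℚ
  have h2 : PowerSeries.rescale (2:ℚ) Bps * (e * e - 1) = 2 * PowerSeries.X := by
    have := congrArg (PowerSeries.rescale (2 : ℚ)) h1
    rw [map_mul, map_sub, map_one, rescale_two_exp, rescale_two_X] at this
    exact this
  calc (e + 1) * PowerSeries.rescale (2:ℚ) Bps * (e - 1)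
      = PowerSeries.rescale (2:ℚ) Bps * (e * e - 1) := by ring
    _ = 2 * PowerSeries.X := h2
    _ = 2 * (Bps * (e - 1)) := by rw [h1]
    _ = 2 * Bps * (e - 1) := by ring

noncomputable def Sh : PowerSeries ℚ :=
  PowerSeries.mk fun n => if Even n then (1 : ℚ) / (n + 1).factorial else 0

lemma hSh : 2 * (PowerSeries.X * Sh) = e - PowerSeries.rescale (-1 : ℚ) e := by
  rw [show ((2:ℚ⟦X⟧)) = PowerSeries.C (2:ℚ) from (map_ofNat (PowerSeries.C (R := ℚ)) 2).symm]
  ext n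
  rw [map_sub, PowerSeries.coeff_C_mul, PowerSeries.coeff_rescale]
  simp only [e, PowerSeries.coeff_exp, Algebra.algebraMap_self, RingHom.id_apply]
  cases n with
  | zero => simp
  | succ m =>
    rw [PowerSeries.coeff_succ_X_mul]
    simp only [Sh, PowerSeries.coeff_mk]
    rcases Nat.even_or_odd m with hm | hm
    · rw [if_pos hm]
      have h1 : ((-1:ℚ)) ^ (m + 1) = -1 := Odd.neg_one_pow hm.add_one
      rw [h1]
      ring
    · rw [if_neg (Nat.not_even_iff_odd.mpr hm)]
      have h1 : ((-1:ℚ)) ^ (m + 1) = 1 := Even.neg_one_pow hm.add_one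
      rw [h1]
      ring

lemma exp_mul_exp_neg : e * PowerSeries.rescale (-1 : ℚ) e = 1 := by
  simpa [PowerSeries.evalNegHom, e] using PowerSeries.exp_mul_exp_neg_eq_one (A := ℚ)

lemma hR2 : PowerSeries.rescale (2:ℚ) Bps * (e * e - 1) = 2 * PowerSeries.X := by
  have h1 : Bps * (e - 1) = PowerSeries.X := bernoulliPowerSeries_mul_exp_sub_one ℚ
  have := congrArg (PowerSeries.rescale (2 : ℚ)) h1
  rw [map_mul, map_sub, map_one, rescale_two_exp, rescale_two_X] at this
  exact this

noncomputable def G : PowerSeries ℚ := 2 * Bps - PowerSeries.rescale 2 Bps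

lemma hGe : G = e * PowerSeries.rescale 2 Bps := by
  rw [G, ← hGA]
  ring

lemma hGSh : G * Sh = 1 := by
  have hX : (2 : ℚ⟦X⟧) * PowerSeries.X ≠ 0 := by
    intro h
    have := congrArg (PowerSeries.coeff 1) h
    rw [show ((2:ℚ⟦X⟧)) = PowerSeries.C (2:ℚ) from (map_ofNat (PowerSeries.C (R := ℚ)) 2).symm] at this
    simp [PowerSeries.coeff_C_mul] at this
  apply mul_right_cancel₀ hX
  rw [one_mul]
  calc G * Sh * (2 * PowerSeries.X)
      = e * PowerSeries.rescale 2 Bps * (2 * (PowerSeries.X * Sh)) := by rw [hGe]; ring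
    _ = e * PowerSeries.rescale 2 Bps * (e - PowerSeries.rescale (-1) e) := by rw [hSh]
    _ = PowerSeries.rescale 2 Bps * (e * e) -
        PowerSeries.rescale 2 Bps * (e * PowerSeries.rescale (-1) e) := by ring
    _ = PowerSeries.rescale 2 Bps * (e * e - 1) := by rw [exp_mul_exp_neg]; ring
    _ = 2 * PowerSeries.X := hR2

lemma coeffG (n : ℕ) :
    PowerSeries.coeff n G = (2 - 2 ^ n) * bernoulli n / (n.factorial : ℚ) := by
  rw [G, map_sub, show ((2:ℚ⟦X⟧)) = PowerSeries.C (2:ℚ) from (map_ofNat (PowerSeries.C (R := ℚ)) 2).symm,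
    PowerSeries.coeff_C_mul, PowerSeries.coeff_rescale]
  simp only [Bps, bernoulliPowerSeries, PowerSeries.coeff_mk, Algebra.algebraMap_self,
    RingHom.id_apply]
  ring

lemma sum_range_even (f : ℕ → ℚ) (hodd : ∀ n, Odd n → f n = 0) (m : ℕ) :
    ∑ n ∈ range (2 * m + 1), f n = ∑ q ∈ range (m + 1), f (2 * q) := by
  induction m with
  | zero => simp
  | succ m ih =>
    rw [show 2 * (m + 1) + 1 = (2 * m + 1) + 1 + 1 by ring, Finset.sum_range_succ,
      Finset.sum_range_succ, ih, hodd (2 * m + 1) ⟨m, by ring⟩,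
      Finset.sum_range_succ (f := fun q => f (2 * q)) (n := m + 1)]
    rw [show 2 * m + 1 + 1 = 2 * (m + 1) by ring]
    ring

lemma key (p : ℕ) (hp : 1 ≤ p) :
    ∑ q ∈ range (p + 1),
      ((2 - 2 ^ (2 * q)) * bernoulli (2 * q) / (((2 * q).factorial : ℕ) : ℚ))
        * (1 / (((2 * (p - q) + 1).factorial : ℕ) : ℚ)) = 0 := by
  have h := congrArg (PowerSeries.coeff (2 * p)) hGSh
  rw [PowerSeries.coeff_mul, PowerSeries.coeff_one, if_neg (by omega),
    Finset.Nat.sum_antidiagonal_eq_sum_range_succ_mk] at h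
  rw [sum_range_even _ ?_ p] at h
  · rw [← h]
    apply Finset.sum_congr rfl
    intro q hq
    have hq' : q ≤ p := by simp at hq; omega
    rw [coeffG]
    simp only [Sh, PowerSeries.coeff_mk]
    rw [if_pos ⟨p - q, by omega⟩, show 2 * p - 2 * q + 1 = 2 * (p - q) + 1 by omega]
  · intro n hn
    rw [coeffG]
    rcases Nat.lt_or_ge n 2 with h2 | h2
    · interval_cases n
      · exact absurd hn (by simp)
      · norm_num
    · rw [show bernoulli n = 0 by
        rw [bernoulli_eq_bernoulli'_of_ne_one (by omega)]
        exact bernoulli'_eq_zero_of_odd hn (by omega)]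
      simp


noncomputable def E (q : ℕ) : ℚ :=
  (-1) ^ q * ((2 - 2 ^ (2 * q)) * bernoulli (2 * q) / (((2 * q).factorial : ℕ) : ℚ))

lemma E_rec (k : ℕ) :
    E (k + 1) = ∑ i ∈ range (k + 1),
      (-1) ^ (k - i) * E i / ((2 * (k - i) + 3).factorial : ℚ) := by
  have h := key (k + 1) (by omega)
  rw [Finset.sum_range_succ] at h
  have hlast : ((2 - 2 ^ (2 * (k + 1))) * bernoulli (2 * (k + 1)) /
      (((2 * (k + 1)).factorial : ℕ) : ℚ)) * (1 / (((2 * (k + 1 - (k + 1)) + 1).factorial : ℕ) : ℚ))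
      = (-1) ^ (k + 1) * E (k + 1) := by
    rw [E]
    have : (-1:ℚ) ^ (k+1) * (-1) ^ (k+1) = 1 := by
      rw [← pow_add]
      exact Even.neg_one_pow ⟨k + 1, by ring⟩
    rw [Nat.sub_self, mul_zero, zero_add]
    simp [mul_comm, mul_assoc, mul_left_comm]
    rw [← mul_assoc, this, one_mul]
  rw [hlast] at h
  have h2 : (-1:ℚ) ^ (k + 1) * E (k + 1) =
      - ∑ q ∈ range (k + 1), ((2 - 2 ^ (2 * q)) * bernoulli (2 * q) /
        (((2 * q).factorial : ℕ) : ℚ)) * (1 / (((2 * (k + 1 - q) + 1).factorial : ℕ) : ℚ)) := by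
    linarith [h]
  have h3 : E (k + 1) = (-1:ℚ) ^ (k + 1) * ((-1:ℚ) ^ (k + 1) * E (k + 1)) := by
    rw [← mul_assoc, ← pow_add]
    rw [Even.neg_one_pow ⟨k + 1, by ring⟩, one_mul]
  rw [h3, h2, ← Finset.sum_neg_distrib, Finset.mul_sum]
  apply Finset.sum_congr rfl
  intro i hi
  have hik : i ≤ k := by simp at hi; omega
  have hfq : ((2 - 2 ^ (2 * i)) * bernoulli (2 * i) / (((2 * i).factorial : ℕ) : ℚ))
      = (-1) ^ i * E i := by
    rw [E, ← mul_assoc, ← pow_add]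
    rw [Even.neg_one_pow ⟨i, by ring⟩, one_mul]
  have hfac : 2 * (k + 1 - i) + 1 = 2 * (k - i) + 3 := by omega
  rw [hfq, hfac]
  have hsgn : (-1:ℚ) ^ (k + 1) * -((-1) ^ i) = (-1) ^ (k - i) := by
    rw [neg_one_pow_sub hik, pow_add, pow_succ]
    ring
  field_simp
  linear_combination (E i) * hsgn

lemma D_eq_E : ∀ p : ℕ, D p = E p := by
  intro p
  induction p using Nat.strong_induction_on with
  | _ p ih =>
    match p with
    | 0 => norm_num [D, E]
    | k + 1 =>
      rw [D_rec, E_rec]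
      apply Finset.sum_congr rfl
      intro i hi
      rw [ih i (by simp at hi; omega)]

theorem bernoulli_even_eq_det (p : ℕ) (hp : 1 ≤ p) :
    bernoulli (2 * p) =
      (-1 : ℚ) ^ (p + 1) * ((2 * p).factorial : ℚ) * D p /
        (2 * (2 ^ (2 * p - 1) - 1)) := by
  rw [D_eq_E, E]
  have hden : (2:ℚ) * (2 ^ (2 * p - 1) - 1) = 2 ^ (2 * p) - 2 := by
    rw [mul_sub, mul_comm, ← pow_succ, show 2 * p - 1 + 1 = 2 * p by omega]
    ring
  have hc : (4:ℚ) ≤ 2 ^ (2 * p) := by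
    calc (4:ℚ) = 2 ^ 2 := by norm_num
    _ ≤ 2 ^ (2 * p) := by
      apply pow_le_pow_right₀ (by norm_num)
      omega
  have hne : (2:ℚ) ^ (2 * p) - 2 ≠ 0 := by linarith
  have hfac : (((2 * p).factorial : ℕ) : ℚ) ≠ 0 := by
    exact_mod_cast Nat.factorial_ne_zero (2 * p)
  rw [hden]
  rw [eq_div_iff hne]
  have hsgn : (-1:ℚ) ^ (p + 1) * (-1) ^ p = -1 := by
    rw [← pow_add]
    exact Odd.neg_one_pow ⟨p, by ring⟩
  field_simp
  linear_combination ((2 ^ (2 * p) - 2) * bernoulli (2 * p)) * hsgn
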